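/- Let i, j, r, s be pairwise distinct indices in {1, …, 2g+2}. Choose symmetric ratios for (i,j), for (r,s), for (i,r) and for (j,s), with associated symmetric discriminants D_{ij}, D_{rs} and symmetric roots ℓ_{irs}, ℓ_{jsi}. Then D_{ij}² = (ℓ_{irs}^{4g}·ℓ_{jsi}^{4g})^{2g+1} · D_{rs}²; that is, D_{ij} = ℓ_{irs}^{2g(2g+1)}·ℓ_{jsi}^{2g(2g+1)}·D_{rs} up to a root of unity, and the relation between the squares is independent of all choices of symmetric ratios. -/

import Mathlib

open Finset

lemma aux_prod_offDiag_mul {n : ℕ} {K : Type*} [Field K]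
    (V : Finset (Fin n)) (f : Fin n → K) (hf : ∀ m ∈ V, f m ≠ 0) :
    ∏ p ∈ V.offDiag, (f p.1 * f p.2) = (∏ m ∈ V, f m) ^ (2 * (V.card - 1)) := by
  rcases V.eq_empty_or_nonempty with rfl | hV
  · simp
  have hP : (∏ m ∈ V, f m) ≠ 0 := prod_ne_zero_iff.mpr hf
  have h1 : (∏ p ∈ V.diag, (f p.1 * f p.2)) * ∏ p ∈ V.offDiag, (f p.1 * f p.2)
      = ∏ p ∈ V ×ˢ V, (f p.1 * f p.2) := by
    rw [← prod_union (disjoint_diag_offDiag V), diag_union_offDiag]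
  have h2 : (∏ p ∈ V.diag, (f p.1 * f p.2)) = (∏ m ∈ V, f m) ^ 2 := by
    rw [prod_diag, sq, ← prod_mul_distrib]
  have h3 : ∏ p ∈ V ×ˢ V, (f p.1 * f p.2) = (∏ m ∈ V, f m) ^ (2 * V.card) := by
    rw [prod_mul_distrib]
    rw [show (∏ p ∈ V ×ˢ V, f p.1) = ∏ x ∈ V, ∏ y ∈ V, f x from prod_product ..,
      show (∏ p ∈ V ×ˢ V, f p.2) = ∏ x ∈ V, ∏ y ∈ V, f y from prod_product ..]
    simp only [prod_const, prod_pow]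
    rw [← pow_add, two_mul]
  have hcard : 1 ≤ V.card := hV.card_pos
  have key : (∏ m ∈ V, f m) ^ 2 * ∏ p ∈ V.offDiag, (f p.1 * f p.2)
      = (∏ m ∈ V, f m) ^ 2 * (∏ m ∈ V, f m) ^ (2 * (V.card - 1)) := by
    rw [← h2, h1, h3, h2, ← pow_add]
    congr 1
    omega
  exact mul_left_cancel₀ (pow_ne_zero 2 hP) key

lemma aux_prod_offDiag_symm {n : ℕ} {M : Type*} [CommMonoid M]
    (V : Finset (Fin n)) (f : Fin n → Fin n → M) (hf : ∀ m m', f m m' = f m' m) :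
    ∏ p ∈ V.offDiag, f p.1 p.2
      = (∏ m ∈ V, ∏ m' ∈ V.filter (fun m' => m < m'), f m m') ^ 2 := by
  have hsplit : V.offDiag
      = (V ×ˢ V).filter (fun p => p.1 < p.2) ∪ (V ×ˢ V).filter (fun p => p.2 < p.1) := by
    ext p
    simp only [mem_offDiag, mem_union, mem_filter, mem_product]
    constructor
    · rintro ⟨h1, h2, h3⟩
      rcases lt_or_gt_of_ne h3 with h | h
      · exact Or.inl ⟨⟨h1, h2⟩, h⟩
      · exact Or.inr ⟨⟨h1, h2⟩, h⟩
    · rintro (⟨⟨h1, h2⟩, h⟩ | ⟨⟨h1, h2⟩, h⟩)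
      · exact ⟨h1, h2, ne_of_lt h⟩
      · exact ⟨h1, h2, (ne_of_lt h).symm⟩
  have hdisj : Disjoint ((V ×ˢ V).filter (fun p => p.1 < p.2))
      ((V ×ˢ V).filter (fun p => p.2 < p.1)) := by
    rw [disjoint_left]
    intro p hp hq
    simp only [mem_filter] at hp hq
    exact absurd hq.2 (not_lt_of_gt hp.2)
  have hswap : ∏ p ∈ (V ×ˢ V).filter (fun p => p.2 < p.1), f p.1 p.2
      = ∏ p ∈ (V ×ˢ V).filter (fun p => p.1 < p.2), f p.1 p.2 := by
    apply prod_nbij' Prod.swap Prod.swap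
    · intro p hp; simp only [mem_filter, mem_product] at hp ⊢
      exact ⟨⟨hp.1.2, hp.1.1⟩, hp.2⟩
    · intro p hp; simp only [mem_filter, mem_product] at hp ⊢
      exact ⟨⟨hp.1.2, hp.1.1⟩, hp.2⟩
    · intro p _; simp
    · intro p _; simp
    · intro p _; exact hf p.1 p.2
  have hdouble : ∏ p ∈ (V ×ˢ V).filter (fun p => p.1 < p.2), f p.1 p.2
      = ∏ m ∈ V, ∏ m' ∈ V.filter (fun m' => m < m'), f m m' := by
    rw [prod_filter]
    rw [show (∏ p ∈ V ×ˢ V, if p.1 < p.2 then f p.1 p.2 else 1)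
        = ∏ x ∈ V, ∏ y ∈ V, if x < y then f x y else 1 from prod_product ..]
    simp [prod_filter]
  rw [hsplit, prod_union hdisj, hswap, hdouble, sq]

lemma master_formula (g : ℕ) (hg : 1 ≤ g) (K : Type*) [Field K]
    (α : Fin (2*g+2) → K) (hα : Function.Injective α)
    (d : Fin (2*g+2) → K) (hd : ∀ m, d m = ∏ n ∈ univ.erase m, (α m - α n))
    (a b : Fin (2*g+2)) (hab : a ≠ b)
    (p : K) (hp : p ^ (4*g) = (d b / d a) ^ 2)
    (ℓ : Fin (2*g+2) → K) (hℓ : ∀ m, ℓ m = p * (α a - α m) / (α b - α m))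
    (D : K)
    (hD : D = (∏ m ∈ univ \ {a, b}, ℓ m) ^ 2 *
      ∏ m ∈ univ \ {a, b}, ∏ m' ∈ (univ \ {a, b}).filter (fun m' => m < m'),
        (ℓ m - ℓ m') ^ 2) :
    D ^ 2 * (d a * d b) ^ (4*g+2)
      = (∏ q ∈ (univ : Finset (Fin (2*g+2))).offDiag, (α q.1 - α q.2)) ^ 2
        * (α a - α b) ^ (4*g*(2*g+1)) := by
  obtain ⟨e, rfl⟩ : ∃ e, g = e + 1 := ⟨g - 1, by omega⟩
  have hne : ∀ {x y : Fin (2*(e+1)+2)}, x ≠ y → α x - α y ≠ 0 := fun h =>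
    sub_ne_zero.mpr (fun he => h (hα he))
  have hdne : ∀ m, d m ≠ 0 := by
    intro m
    rw [hd m]
    exact prod_ne_zero_iff.mpr (fun n hn => hne (fun hmn => (mem_erase.mp hn).1 hmn.symm))
  set S : Finset (Fin (2*(e+1)+2)) := univ \ {a, b} with hS
  have haS : a ∉ S := by simp [hS]
  have hbS : b ∉ S := by simp [hS]
  have hSmem : ∀ m ∈ S, m ≠ a ∧ m ≠ b := by
    intro m hm
    simp only [hS, mem_sdiff, mem_insert, mem_singleton] at hm
    exact ⟨fun h => hm.2 (Or.inl h), fun h => hm.2 (Or.inr h)⟩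
  have hcardS : S.card = 2*e + 2 := by
    rw [hS, card_sdiff_of_subset (subset_univ _), card_univ, Fintype.card_fin, card_pair hab]
    omega
  obtain ⟨x, hx⟩ : ∃ x, α a - α b = x := ⟨_, rfl⟩
  have hxne : x ≠ 0 := hx ▸ hne hab
  obtain ⟨A, hA⟩ : ∃ A, ∏ m ∈ S, (α a - α m) = A := ⟨_, rfl⟩
  obtain ⟨B, hB⟩ : ∃ B, ∏ m ∈ S, (α b - α m) = B := ⟨_, rfl⟩
  have hAne : A ≠ 0 := hA ▸ prod_ne_zero_iff.mpr (fun m hm => hne (Ne.symm (hSmem m hm).1))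
  have hBne : B ≠ 0 := hB ▸ prod_ne_zero_iff.mpr (fun m hm => hne (Ne.symm (hSmem m hm).2))
  have herasea : univ.erase a = insert b S := by
    ext m
    simp only [mem_erase, mem_univ, and_true, mem_insert, hS, mem_sdiff, mem_singleton,
      true_and]
    constructor
    · intro h
      by_cases hmb : m = b
      · exact Or.inl hmb
      · exact Or.inr (by tauto)
    · rintro (rfl | h)
      · exact hab.symm
      · tauto
  have heraseb : univ.erase b = insert a S := by
    ext m
    simp only [mem_erase, mem_univ, and_true, mem_insert, hS, mem_sdiff, mem_singleton,
      true_and]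
    constructor
    · intro h
      by_cases hma : m = a
      · exact Or.inl hma
      · exact Or.inr (by tauto)
    · rintro (rfl | h)
      · exact hab
      · tauto
  have hda : d a = x * A := by
    rw [hd a, herasea, prod_insert hbS, hA, hx]
  have hdb : d b = -(x * B) := by
    rw [hd b, heraseb, prod_insert haS, hB, ← hx]
    ring
  obtain ⟨P, hP⟩ : ∃ P, ∏ m ∈ S, ℓ m = P := ⟨_, rfl⟩
  obtain ⟨Q, hQ⟩ : ∃ Q, ∏ m ∈ S, ∏ m' ∈ S.filter (fun m' => m < m'), (ℓ m - ℓ m') ^ 2 = Q :=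
    ⟨_, rfl⟩
  obtain ⟨E, hE⟩ : ∃ E, ∏ q ∈ S.offDiag, (α q.1 - α q.2) ^ 2 = E := ⟨_, rfl⟩
  rw [hD, hP, hQ, hx]
  -- f1
  have f1 : P * B = p ^ (2*(e+1)) * A := by
    rw [← hP, ← hB, ← prod_mul_distrib]
    have hpt : ∀ m ∈ S, ℓ m * (α b - α m) = p * (α a - α m) := by
      intro m hm
      rw [hℓ m, div_mul_cancel₀]
      exact hne (Ne.symm (hSmem m hm).2)
    rw [prod_congr rfl hpt, prod_mul_distrib, prod_const, hcardS, hA,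
      show 2*e+2 = 2*(e+1) from by ring]
  -- f2
  have hsym : ∏ q ∈ S.offDiag, (ℓ q.1 - ℓ q.2) ^ 2 = Q ^ 2 := by
    have h := aux_prod_offDiag_symm S (fun m m' => (ℓ m - ℓ m') ^ 2) (fun m m' => by ring)
    rw [hQ] at h
    exact h
  have hcnt : ∏ q ∈ S.offDiag, ((α b - α q.1) * (α b - α q.2)) = B ^ (2*(2*e+1)) := by
    have h := aux_prod_offDiag_mul S (fun m => α b - α m)
      (fun m hm => hne (Ne.symm (hSmem m hm).2))
    rw [hcardS, hB, show 2*(2*e+2-1) = 2*(2*e+1) from by omega] at h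
    exact h
  have hoffcard : S.offDiag.card = (2*e+2) * (2*e+1) := by
    rw [offDiag_card, hcardS]
    have h2 : (2*e+2) * (2*e+2) = (2*e+2)*(2*e+1) + (2*e+2) := by ring
    omega
  have hfact : ∀ q ∈ S.offDiag, (ℓ q.1 - ℓ q.2) * ((α b - α q.1) * (α b - α q.2))
      = p * x * (α q.1 - α q.2) := by
    intro q hq
    rw [mem_offDiag] at hq
    have h1 : α b - α q.1 ≠ 0 := hne (Ne.symm (hSmem q.1 hq.1).2)
    have h2 : α b - α q.2 ≠ 0 := hne (Ne.symm (hSmem q.2 hq.2.1).2)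
    rw [hℓ q.1, hℓ q.2, ← hx]
    field_simp
    ring
  have f2 : Q ^ 2 * B ^ (4*(2*e+1))
      = p ^ (2*((2*e+2)*(2*e+1))) * x ^ (2*((2*e+2)*(2*e+1))) * E := by
    calc Q ^ 2 * B ^ (4*(2*e+1))
        = (∏ q ∈ S.offDiag, (ℓ q.1 - ℓ q.2) ^ 2)
          * (∏ q ∈ S.offDiag, ((α b - α q.1) * (α b - α q.2))) ^ 2 := by
          rw [hsym, hcnt, ← pow_mul, show 2*(2*e+1)*2 = 4*(2*e+1) from by ring]
      _ = ∏ q ∈ S.offDiag, ((ℓ q.1 - ℓ q.2) * ((α b - α q.1) * (α b - α q.2))) ^ 2 := by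
          rw [← prod_pow, ← prod_mul_distrib]
          exact prod_congr rfl (fun q hq => by ring)
      _ = ∏ q ∈ S.offDiag, ((p * x) ^ 2 * (α q.1 - α q.2) ^ 2) := by
          exact prod_congr rfl (fun q hq => by rw [hfact q hq]; ring)
      _ = ((p * x) ^ 2) ^ ((2*e+2)*(2*e+1)) * E := by
          rw [prod_mul_distrib, prod_const, hoffcard, hE]
      _ = p ^ (2*((2*e+2)*(2*e+1))) * x ^ (2*((2*e+2)*(2*e+1))) * E := by
          rw [← pow_mul, mul_pow]
  -- f3
  have sq_flip : ∀ (W : Finset (Fin (2*(e+1)+2))) (c : Fin (2*(e+1)+2)),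
      (∏ m ∈ W, (α m - α c)) ^ 2 = (∏ m ∈ W, (α c - α m)) ^ 2 := by
    intro W c
    rw [← prod_pow, ← prod_pow]
    exact prod_congr rfl (fun m _ => by ring)
  have f3 : (∏ q ∈ (univ : Finset (Fin (2*(e+1)+2))).offDiag, (α q.1 - α q.2)) ^ 2
      = E * B ^ 4 * (d a) ^ 4 := by
    have split : ∀ (c : Fin (2*(e+1)+2)) (W : Finset (Fin (2*(e+1)+2))), c ∉ W →
        (∏ q ∈ (insert c W).offDiag, (α q.1 - α q.2)) ^ 2
        = (∏ q ∈ W.offDiag, (α q.1 - α q.2)) ^ 2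
          * ((∏ m ∈ W, (α c - α m)) ^ 2) ^ 2 := by
      intro c W hcW
      rw [offDiag_insert hcW]
      have d1 : Disjoint (W.offDiag ∪ {c} ×ˢ W) (W ×ˢ {c}) := by
        rw [disjoint_left]
        rintro q hq hq2
        simp only [mem_product, mem_singleton] at hq2
        rcases mem_union.mp hq with h | h
        · rw [mem_offDiag] at h
          exact hcW (hq2.2 ▸ h.2.1)
        · simp only [mem_product, mem_singleton] at h
          exact hcW (h.1 ▸ hq2.1)
      have d2 : Disjoint W.offDiag ({c} ×ˢ W) := by
        rw [disjoint_left]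
        rintro q hq hq2
        simp only [mem_product, mem_singleton] at hq2
        rw [mem_offDiag] at hq
        exact hcW (hq2.1 ▸ hq.1)
      rw [prod_union d1, prod_union d2]
      have e1 : ∏ q ∈ {c} ×ˢ W, (α q.1 - α q.2) = ∏ m ∈ W, (α c - α m) := by
        rw [show (∏ q ∈ {c} ×ˢ W, (α q.1 - α q.2))
          = ∏ u ∈ ({c} : Finset (Fin (2*(e+1)+2))), ∏ v ∈ W, (α u - α v) from prod_product ..,
          prod_singleton]
      have e2 : ∏ q ∈ W ×ˢ {c}, (α q.1 - α q.2) = ∏ m ∈ W, (α m - α c) := by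
        rw [show (∏ q ∈ W ×ˢ {c}, (α q.1 - α q.2))
          = ∏ u ∈ W, ∏ v ∈ ({c} : Finset (Fin (2*(e+1)+2))), (α u - α v) from prod_product ..]
        simp
      rw [e1, e2, mul_pow, mul_pow, sq_flip W c]
      ring
    have hu : (univ : Finset (Fin (2*(e+1)+2))) = insert a (univ.erase a) :=
      (insert_erase (mem_univ a)).symm
    have hu2 : univ.erase a = insert b S := herasea
    have hda2 : ∏ m ∈ univ.erase a, (α a - α m) = d a := (hd a).symm
    calc (∏ q ∈ (univ : Finset (Fin (2*(e+1)+2))).offDiag, (α q.1 - α q.2)) ^ 2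
        = (∏ q ∈ (univ.erase a).offDiag, (α q.1 - α q.2)) ^ 2
          * ((∏ m ∈ univ.erase a, (α a - α m)) ^ 2) ^ 2 := by
          rw [← split a (univ.erase a) (notMem_erase a univ), ← hu]
      _ = ((∏ q ∈ S.offDiag, (α q.1 - α q.2)) ^ 2 * ((∏ m ∈ S, (α b - α m)) ^ 2) ^ 2)
          * ((d a) ^ 2) ^ 2 := by
          rw [hda2, hu2, split b S hbS]
      _ = E * B ^ 4 * (d a) ^ 4 := by
          rw [hB, ← prod_pow, hE]
          ring
  -- eliminate p
  have hp4 : p ^ (4*(e+1)) * (d a) ^ 2 = (d b) ^ 2 := by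
    rw [hp, div_pow, div_mul_cancel₀ _ (pow_ne_zero 2 (hdne a))]
  have g1 : P ^ 2 * B ^ 2 * (d a) ^ 2 = (d b) ^ 2 * A ^ 2 := by
    calc P ^ 2 * B ^ 2 * (d a) ^ 2
        = (P * B) ^ 2 * (d a) ^ 2 := by ring
      _ = (p ^ (2*(e+1))) ^ 2 * A ^ 2 * (d a) ^ 2 := by rw [f1, mul_pow]
      _ = p ^ (4*(e+1)) * (d a) ^ 2 * A ^ 2 := by
          rw [← pow_mul, show 2*(e+1)*2 = 4*(e+1) from by ring]
          ring
      _ = (d b) ^ 2 * A ^ 2 := by rw [hp4]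
  have g2 : Q ^ 2 * B ^ (4*(2*e+1)) * (d a) ^ (2*(2*e+1))
      = (d b) ^ (2*(2*e+1)) * x ^ (2*((2*e+2)*(2*e+1))) * E := by
    calc Q ^ 2 * B ^ (4*(2*e+1)) * (d a) ^ (2*(2*e+1))
        = p ^ (2*((2*e+2)*(2*e+1))) * x ^ (2*((2*e+2)*(2*e+1))) * E
            * (d a) ^ (2*(2*e+1)) := by rw [f2]
      _ = (p ^ (4*(e+1))) ^ (2*e+1) * ((d a) ^ 2) ^ (2*e+1)
            * (x ^ (2*((2*e+2)*(2*e+1))) * E) := by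
          rw [← pow_mul, ← pow_mul, show 4*(e+1)*(2*e+1) = 2*((2*e+2)*(2*e+1)) from by ring]
          ring
      _ = (p ^ (4*(e+1)) * (d a) ^ 2) ^ (2*e+1) * (x ^ (2*((2*e+2)*(2*e+1))) * E) := by
          rw [mul_pow]
      _ = ((d b) ^ 2) ^ (2*e+1) * (x ^ (2*((2*e+2)*(2*e+1))) * E) := by rw [hp4]
      _ = (d b) ^ (2*(2*e+1)) * x ^ (2*((2*e+2)*(2*e+1))) * E := by
          rw [← pow_mul]
          ring
  -- power expansion facts
  have w1 : (d a) ^ (4*(e+1)+2) = x ^ (4*(e+1)+2) * A ^ (4*(e+1)+2) := by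
    rw [hda, mul_pow]
  have w2 : (d b) ^ (4*(e+1)+2) = x ^ (4*(e+1)+2) * B ^ (4*(e+1)+2) := by
    rw [hdb, Even.neg_pow ⟨2*(e+1)+1, by ring⟩, mul_pow]
  have w3 : (d b) ^ (2*(2*e+1)) = x ^ (2*(2*e+1)) * B ^ (2*(2*e+1)) := by
    rw [hdb, Even.neg_pow ⟨2*e+1, by ring⟩, mul_pow]
  have w4 : (d a) ^ (2*(2*e+1)+4) = x ^ (2*(2*e+1)+4) * A ^ (2*(2*e+1)+4) := by
    rw [hda, mul_pow]
  have Cne : B ^ (4*(2*e+1)+4) * (d a) ^ (2*(2*e+1)+4) ≠ 0 :=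
    mul_ne_zero (pow_ne_zero _ hBne) (pow_ne_zero _ (hdne a))
  apply mul_right_cancel₀ Cne
  rw [f3]
  calc ((P ^ 2 * Q) ^ 2 * (d a * d b) ^ (4*(e+1)+2))
        * (B ^ (4*(2*e+1)+4) * (d a) ^ (2*(2*e+1)+4))
      = (P ^ 2 * B ^ 2 * (d a) ^ 2) ^ 2 * (Q ^ 2 * B ^ (4*(2*e+1)) * (d a) ^ (2*(2*e+1)))
        * ((d a) ^ (4*(e+1)+2) * (d b) ^ (4*(e+1)+2)) := by
        rw [mul_pow (d a) (d b)]
        ring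
    _ = ((d b) ^ 2 * A ^ 2) ^ 2 * ((d b) ^ (2*(2*e+1)) * x ^ (2*((2*e+2)*(2*e+1))) * E)
        * ((x ^ (4*(e+1)+2) * A ^ (4*(e+1)+2)) * (x ^ (4*(e+1)+2) * B ^ (4*(e+1)+2))) := by
        rw [g1, g2, w1, w2]
    _ = ((x ^ 2 * B ^ 2) * A ^ 2) ^ 2
        * ((x ^ (2*(2*e+1)) * B ^ (2*(2*e+1))) * x ^ (2*((2*e+2)*(2*e+1))) * E)
        * ((x ^ (4*(e+1)+2) * A ^ (4*(e+1)+2)) * (x ^ (4*(e+1)+2) * B ^ (4*(e+1)+2))) := by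
        rw [w3, hdb]
        ring
    _ = (E * B ^ 4 * (d a) ^ 4 * x ^ (4*(e+1)*(2*(e+1)+1)))
        * (B ^ (4*(2*e+1)+4) * (d a) ^ (2*(2*e+1)+4)) := by
        rw [w4, hda]
        ring


/-- For pairwise distinct `i, j, r, s` and any choices of symmetric ratios for
`(i,j)`, `(r,s)`, `(i,r)` and `(j,s)`, the associated symmetric discriminants satisfy
`D_{ij}² = (ℓ_{irs}^{4g}·ℓ_{jsi}^{4g})^{2g+1} · D_{rs}²`, i.e.
`D_{ij} = ℓ_{irs}^{2g(2g+1)}·ℓ_{jsi}^{2g(2g+1)}·D_{rs}` up to a root of unity, independently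
of all choices of symmetric ratios. -/
theorem symmetric_discriminant_relation_c
    (g : ℕ) (hg : 1 ≤ g) (K : Type*) [Field K]
    (α : Fin (2*g+2) → K) (hα : Function.Injective α)
    (d : Fin (2*g+2) → K)
    (hd : ∀ m, d m = ∏ n ∈ univ.erase m, (α m - α n))
    (i j r s : Fin (2*g+2))
    (hij : i ≠ j) (hir : i ≠ r) (his : i ≠ s) (hjr : j ≠ r) (hjs : j ≠ s) (hrs : r ≠ s)
    (pij : K) (hpij : pij ^ (4*g) = (d j / d i) ^ 2)
    (ℓij : Fin (2*g+2) → K)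
    (hℓij : ∀ m, ℓij m = pij * (α i - α m) / (α j - α m))
    (prs : K) (hprs : prs ^ (4*g) = (d s / d r) ^ 2)
    (ℓrs : Fin (2*g+2) → K)
    (hℓrs : ∀ m, ℓrs m = prs * (α r - α m) / (α s - α m))
    (pir : K) (hpir : pir ^ (4*g) = (d r / d i) ^ 2)
    (ℓir : Fin (2*g+2) → K)
    (hℓir : ∀ m, ℓir m = pir * (α i - α m) / (α r - α m))
    (pjs : K) (hpjs : pjs ^ (4*g) = (d s / d j) ^ 2)
    (ℓjs : Fin (2*g+2) → K)
    (hℓjs : ∀ m, ℓjs m = pjs * (α j - α m) / (α s - α m))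
    (Dij : K)
    (hDij : Dij = (∏ m ∈ univ \ {i, j}, ℓij m) ^ 2 *
      ∏ m ∈ univ \ {i, j}, ∏ m' ∈ (univ \ {i, j}).filter (fun m' => m < m'),
        (ℓij m - ℓij m') ^ 2)
    (Drs : K)
    (hDrs : Drs = (∏ m ∈ univ \ {r, s}, ℓrs m) ^ 2 *
      ∏ m ∈ univ \ {r, s}, ∏ m' ∈ (univ \ {r, s}).filter (fun m' => m < m'),
        (ℓrs m - ℓrs m') ^ 2) :
    Dij ^ 2 = ((ℓir s) ^ (4*g) * (ℓjs i) ^ (4*g)) ^ (2*g+1) * Drs ^ 2 := by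
  have hne : ∀ {x y : Fin (2*g+2)}, x ≠ y → α x - α y ≠ 0 := fun h =>
    sub_ne_zero.mpr (fun he => h (hα he))
  have hdne : ∀ m, d m ≠ 0 := by
    intro m
    rw [hd m]
    exact prod_ne_zero_iff.mpr (fun n hn => hne (fun hmn => (mem_erase.mp hn).1 hmn.symm))
  have M1 := master_formula g hg K α hα d hd i j hij pij hpij ℓij hℓij Dij hDij
  have M2 := master_formula g hg K α hα d hd r s hrs prs hprs ℓrs hℓrs Drs hDrs
  rw [mul_pow] at M1 M2
  -- M1 : Dij^2 * ((d i)^(4g+2) * (d j)^(4g+2)) = T2 * (α i - α j)^(4g(2g+1))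
  have R1 : (ℓir s) ^ (4*g) * ((d i)^2 * (α r - α s)^(4*g))
      = (d r)^2 * (α i - α s)^(4*g) := by
    have h1 : (ℓir s) ^ (4*g)
        = ((d r)^2 * (α i - α s)^(4*g)) / ((d i)^2 * (α r - α s)^(4*g)) := by
      rw [hℓir s, mul_div_assoc, mul_pow, div_pow, hpir, div_pow, div_mul_div_comm]
    rw [h1, div_mul_cancel₀]
    exact mul_ne_zero (pow_ne_zero 2 (hdne i)) (pow_ne_zero _ (hne hrs))
  have R2 : (ℓjs i) ^ (4*g) * ((d j)^2 * (α i - α s)^(4*g))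
      = (d s)^2 * (α i - α j)^(4*g) := by
    have h2 : (ℓjs i) ^ (4*g)
        = ((d s)^2 * (α j - α i)^(4*g)) / ((d j)^2 * (α s - α i)^(4*g)) := by
      rw [hℓjs i, mul_div_assoc, mul_pow, div_pow, hpjs, div_pow, div_mul_div_comm]
    have ev1 : (α j - α i)^(4*g) = (α i - α j)^(4*g) := by
      rw [show α j - α i = -(α i - α j) from by ring, Even.neg_pow ⟨2*g, by ring⟩]
    have ev2 : (α s - α i)^(4*g) = (α i - α s)^(4*g) := by
      rw [show α s - α i = -(α i - α s) from by ring, Even.neg_pow ⟨2*g, by ring⟩]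
    rw [h2, ev1, ev2, div_mul_cancel₀]
    exact mul_ne_zero (pow_ne_zero 2 (hdne j)) (pow_ne_zero _ (hne his))
  have R3 : (ℓir s) ^ (4*g) * (ℓjs i) ^ (4*g) * ((d i)^2 * (d j)^2 * (α r - α s)^(4*g))
      = (d r)^2 * (d s)^2 * (α i - α j)^(4*g) := by
    have hU : (α i - α s)^(4*g) ≠ 0 := pow_ne_zero _ (hne his)
    apply mul_right_cancel₀ hU
    calc (ℓir s)^(4*g) * (ℓjs i)^(4*g) * ((d i)^2 * (d j)^2 * (α r - α s)^(4*g))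
          * (α i - α s)^(4*g)
        = ((ℓir s)^(4*g) * ((d i)^2 * (α r - α s)^(4*g)))
          * ((ℓjs i)^(4*g) * ((d j)^2 * (α i - α s)^(4*g))) := by ring
      _ = ((d r)^2 * (α i - α s)^(4*g)) * ((d s)^2 * (α i - α j)^(4*g)) := by rw [R1, R2]
      _ = (d r)^2 * (d s)^2 * (α i - α j)^(4*g) * (α i - α s)^(4*g) := by ring
  have R3' : ((ℓir s)^(4*g) * (ℓjs i)^(4*g))^(2*g+1)
      * ((d i)^(4*g+2) * (d j)^(4*g+2) * (α r - α s)^(4*g*(2*g+1)))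
      = (d r)^(4*g+2) * (d s)^(4*g+2) * (α i - α j)^(4*g*(2*g+1)) := by
    have h := congrArg (fun t : K => t ^ (2*g+1)) R3
    simp only [mul_pow, ← pow_mul] at h
    linear_combination h
  have Cne : (d i)^(4*g+2) * (d j)^(4*g+2) * (α r - α s)^(4*g*(2*g+1))
      * ((d r)^(4*g+2) * (d s)^(4*g+2)) ≠ 0 := by
    refine mul_ne_zero (mul_ne_zero (mul_ne_zero ?_ ?_) ?_) (mul_ne_zero ?_ ?_) <;>
      exact pow_ne_zero _ (by first | exact hdne _ | exact hne hrs)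
  apply mul_right_cancel₀ Cne
  calc Dij ^ 2 * ((d i)^(4*g+2) * (d j)^(4*g+2) * (α r - α s)^(4*g*(2*g+1))
        * ((d r)^(4*g+2) * (d s)^(4*g+2)))
      = (Dij ^ 2 * ((d i)^(4*g+2) * (d j)^(4*g+2)))
        * ((α r - α s)^(4*g*(2*g+1)) * ((d r)^(4*g+2) * (d s)^(4*g+2))) := by ring
    _ = ((∏ q ∈ (univ : Finset (Fin (2*g+2))).offDiag, (α q.1 - α q.2)) ^ 2
          * (α i - α j) ^ (4*g*(2*g+1)))
        * ((α r - α s)^(4*g*(2*g+1)) * ((d r)^(4*g+2) * (d s)^(4*g+2))) := by rw [M1]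
    _ = (((ℓir s)^(4*g) * (ℓjs i)^(4*g))^(2*g+1)
          * ((d i)^(4*g+2) * (d j)^(4*g+2) * (α r - α s)^(4*g*(2*g+1))))
        * (Drs ^ 2 * ((d r)^(4*g+2) * (d s)^(4*g+2))) := by
        rw [R3', M2]
        ring
    _ = ((ℓir s) ^ (4*g) * (ℓjs i) ^ (4*g)) ^ (2*g+1) * Drs ^ 2
        * ((d i)^(4*g+2) * (d j)^(4*g+2) * (α r - α s)^(4*g*(2*g+1))
          * ((d r)^(4*g+2) * (d s)^(4*g+2))) := by ring
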